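/- Let α = 0.9401. There exists ε ∈ (0,1/2) such that 4/(3 + 12ε) ≤ 1.225 and, for every δ ∈ (0, ε], (5α(√δ − 1))/12 + 2/3 ≤ 1.225 · (1/4 + δ). -/
import Mathlib


/-- Let `α = 0.9401`.  There exists `ε ∈ (0,1/2)` such that
`4/(3 + 12ε) ≤ 1.225` and, for every `δ ∈ (0, ε]`,
`(5α(√δ − 1))/12 + 2/3 ≤ 1.225 · (1/4 + δ)`. -/
theorem approximation_ratio_numerics :
    ∃ ε : ℝ, 0 < ε ∧ ε < 1 / 2 ∧ 4 / (3 + 12 * ε) ≤ 1.225 ∧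
      ∀ δ : ℝ, 0 < δ → δ ≤ ε →
        5 * 0.9401 * (Real.sqrt δ - 1) / 12 + 2 / 3 ≤ 1.225 * (1 / 4 + δ) := by
  refine ⟨9/400, by norm_num, by norm_num, by norm_num, ?_⟩
  intro δ hδ hδε
  set s := Real.sqrt δ with hs
  have hs0 : 0 ≤ s := Real.sqrt_nonneg δ
  have hs2 : s ^ 2 = δ := Real.sq_sqrt hδ.le
  have hsle : s ≤ 3/20 := by
    have : s ≤ Real.sqrt (9/400) := Real.sqrt_le_sqrt hδε
    have h920 : Real.sqrt (9/400) = 3/20 := by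
      rw [show (9:ℝ)/400 = (3/20)^2 by norm_num]
      exact Real.sqrt_sq (by norm_num)
    linarith [this, h920.le]
  nlinarith [mul_nonneg (by linarith : (0:ℝ) ≤ 3/20 - s)
    (by linarith : (0:ℝ) ≤ 4.7005/12 - 1.225 * (s + 3/20))]
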